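/- Let A be a finite-dimensional solvable Leibniz algebra over an infinite field, K a primitive ideal of A, and B/K the unique minimal ideal of A/K. Then K is a generalized Frattini ideal of A if and only if B = Nil(A). -/
import Mathlib


namespace Leib

variable (F : Type*) [Field F] {A : Type*} [NonUnitalNonAssocRing A]
  [Module F A] [SMulCommClass F A A] [IsScalarTower F A A]

/-- `S` is a subalgebra: a submodule closed under multiplication. -/
def IsSubalg (S : Submodule F A) : Prop := ∀ x ∈ S, ∀ y ∈ S, x * y ∈ S

/-- `S` is a (two-sided) ideal of the Leibniz algebra `A`. -/
def IsIdeal (S : Submodule F A) : Prop := ∀ a : A, ∀ s ∈ S, a * s ∈ S ∧ s * a ∈ S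

/-- The normalizer `N_A(C)` of a subspace `C` in `A`. -/
def normalizer (C : Submodule F A) : Submodule F A where
  carrier := {a | ∀ c ∈ C, a * c ∈ C ∧ c * a ∈ C}
  zero_mem' := by intro c hc; simp [C.zero_mem]
  add_mem' := by
    intro a b ha hb c hc
    exact ⟨by rw [add_mul]; exact C.add_mem (ha c hc).1 (hb c hc).1,
           by rw [mul_add]; exact C.add_mem (ha c hc).2 (hb c hc).2⟩
  smul_mem' := by
    intro r a ha c hc
    exact ⟨by rw [smul_mul_assoc]; exact C.smul_mem r (ha c hc).1,
           by rw [mul_smul_comm]; exact C.smul_mem r (ha c hc).2⟩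

/-- The span of all products `s * t` with `s ∈ S`, `t ∈ T`. -/
def mulSpan (S T : Submodule F A) : Submodule F A :=
  Submodule.span F {x | ∃ s ∈ S, ∃ t ∈ T, x = s * t}

/-- The (left-normed) lower central series of a subspace `S`:
`S, S·S, S·(S·S), …`. -/
def lcs (S : Submodule F A) : ℕ → Submodule F A
  | 0 => S
  | n + 1 => mulSpan F S (lcs S n)

/-- `S` is nilpotent. -/
def IsNilp (S : Submodule F A) : Prop := ∃ n, lcs F S n = ⊥

/-- The derived series of a subspace `S`. -/
def derSeries (S : Submodule F A) : ℕ → Submodule F A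
  | 0 => S
  | n + 1 => mulSpan F (derSeries S n) (derSeries S n)

/-- `S` is solvable. -/
def IsSolv (S : Submodule F A) : Prop := ∃ n, derSeries F S n = ⊥

/-- `C` is a Cartan subalgebra of the subalgebra `K`: a nilpotent subalgebra of `K`
that is self-normalizing in `K`. -/
def IsCartanOf (K C : Submodule F A) : Prop :=
  C ≤ K ∧ IsSubalg F C ∧ IsNilp F C ∧ normalizer F C ⊓ K = C

/-- `H` is a generalized Frattini ideal (Cartan-subalgebra definition): `H` is proper and
whenever `A = H + N_A(C)` for `C` a Cartan subalgebra of an ideal `K` of `A`,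
it follows that `A = N_A(C)`. -/
def GenFrattiniC (H : Submodule F A) : Prop :=
  H ≠ ⊤ ∧ ∀ K C : Submodule F A, IsIdeal F K → IsCartanOf F K C →
    H ⊔ normalizer F C = ⊤ → normalizer F C = ⊤

/-- `H` is a generalized Frattini ideal (nilpotency characterization): `H` is proper and
every ideal `J ⊇ H` with `J/H` nilpotent is nilpotent. -/
def GenFrattiniN (H : Submodule F A) : Prop :=
  H ≠ ⊤ ∧ ∀ J : Submodule F A, IsIdeal F J → H ≤ J →
    (∃ n, lcs F J n ≤ H) → IsNilp F J

/-- The center `Z(A)`. -/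
def center : Submodule F A where
  carrier := {z | ∀ a : A, z * a = 0 ∧ a * z = 0}
  zero_mem' := by intro a; simp
  add_mem' := by
    intro x y hx hy a
    exact ⟨by rw [add_mul, (hx a).1, (hy a).1, add_zero],
           by rw [mul_add, (hx a).2, (hy a).2, add_zero]⟩
  smul_mem' := by
    intro r x hx a
    exact ⟨by rw [smul_mul_assoc, (hx a).1, smul_zero],
           by rw [mul_smul_comm, (hx a).2, smul_zero]⟩

/-- `M` is a maximal subalgebra of `A`. -/
def IsMaxSubalg (M : Submodule F A) : Prop :=
  IsSubalg F M ∧ M ≠ ⊤ ∧ ∀ S : Submodule F A, IsSubalg F S → M < S → S = ⊤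

/-- `I` is a maximal ideal of `A`. -/
def IsMaxIdeal (I : Submodule F A) : Prop :=
  IsIdeal F I ∧ I ≠ ⊤ ∧ ∀ J : Submodule F A, IsIdeal F J → I < J → J = ⊤

/-- `K` is a primitive ideal: `Φ(A/K) = 0`, `A/K` has a unique minimal ideal, and
`dim (A/K) > 1`.  (Ideals and maximal subalgebras of `A/K` are stated via the
correspondence with ideals and maximal subalgebras of `A` containing `K`.) -/
def IsPrimitiveIdeal (K : Submodule F A) : Prop :=
  IsIdeal F K ∧
  (∀ J : Submodule F A, IsIdeal F J → K ≤ J →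
      (∀ M : Submodule F A, IsMaxSubalg F M → K ≤ M → J ≤ M) → J = K) ∧
  (∃! B : Submodule F A, IsIdeal F B ∧ K < B ∧
      ∀ B' : Submodule F A, IsIdeal F B' → K < B' → ¬ B' < B) ∧
  1 < Module.finrank F (A ⧸ K)

end Leib

set_option linter.unusedSectionVars false
set_option linter.unusedVariables false

namespace LeibAux
open Leib

variable {F : Type*} [Field F] {A : Type*} [NonUnitalNonAssocRing A]
  [Module F A] [SMulCommClass F A A] [IsScalarTower F A A]

theorem mul_mem_mulSpan {S T : Submodule F A} {s t : A} (hs : s ∈ S) (ht : t ∈ T) :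
    s * t ∈ mulSpan F S T := Submodule.subset_span ⟨s, hs, t, ht, rfl⟩

theorem mulSpan_le {S T U : Submodule F A} (h : ∀ s ∈ S, ∀ t ∈ T, s * t ∈ U) :
    mulSpan F S T ≤ U :=
  Submodule.span_le.2 (by rintro x ⟨s, hs, t, ht, rfl⟩; exact h s hs t ht)

theorem mulSpan_mono {S S' T T' : Submodule F A} (h1 : S ≤ S') (h2 : T ≤ T') :
    mulSpan F S T ≤ mulSpan F S' T' :=
  mulSpan_le fun _ hs _ ht => mul_mem_mulSpan (h1 hs) (h2 ht)

theorem mul_mem_of_left {S T U : Submodule F A} {x a : A} (hx : x ∈ mulSpan F S T)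
    (h : ∀ s ∈ S, ∀ t ∈ T, (s * t) * a ∈ U) : x * a ∈ U := by
  induction hx using Submodule.span_induction with
  | mem y hy => obtain ⟨s, hs, t, ht, rfl⟩ := hy; exact h s hs t ht
  | zero => rw [zero_mul]; exact U.zero_mem
  | add y z _ _ hy hz => rw [add_mul]; exact U.add_mem hy hz
  | smul r y _ hy => rw [smul_mul_assoc]; exact U.smul_mem r hy

theorem mul_mem_of_right {S T U : Submodule F A} {x a : A} (hx : x ∈ mulSpan F S T)
    (h : ∀ s ∈ S, ∀ t ∈ T, a * (s * t) ∈ U) : a * x ∈ U := by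
  induction hx using Submodule.span_induction with
  | mem y hy => obtain ⟨s, hs, t, ht, rfl⟩ := hy; exact h s hs t ht
  | zero => rw [mul_zero]; exact U.zero_mem
  | add y z _ _ hy hz => rw [mul_add]; exact U.add_mem hy hz
  | smul r y _ hy => rw [mul_smul_comm]; exact U.smul_mem r hy

theorem isIdeal_sup {I J : Submodule F A} (hI : IsIdeal F I) (hJ : IsIdeal F J) :
    IsIdeal F (I ⊔ J) := by
  intro a s hs
  obtain ⟨i, hi, j, hj, rfl⟩ := Submodule.mem_sup.1 hs
  constructor
  · rw [mul_add]
    exact add_mem (Submodule.mem_sup_left (hI a i hi).1) (Submodule.mem_sup_right (hJ a j hj).1)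
  · rw [add_mul]
    exact add_mem (Submodule.mem_sup_left (hI a i hi).2) (Submodule.mem_sup_right (hJ a j hj).2)

theorem isIdeal_inf {I J : Submodule F A} (hI : IsIdeal F I) (hJ : IsIdeal F J) :
    IsIdeal F (I ⊓ J) := fun a s hs =>
  ⟨⟨(hI a s hs.1).1, (hJ a s hs.2).1⟩, ⟨(hI a s hs.1).2, (hJ a s hs.2).2⟩⟩



/-- The centralizer of `S` modulo `K`. -/
def cent (K S : Submodule F A) : Submodule F A where
  carrier := {a | ∀ s ∈ S, a * s ∈ K ∧ s * a ∈ K}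
  zero_mem' := by intro s hs; simp [K.zero_mem]
  add_mem' := by
    intro a b ha hb s hs
    exact ⟨by rw [add_mul]; exact K.add_mem (ha s hs).1 (hb s hs).1,
           by rw [mul_add]; exact K.add_mem (ha s hs).2 (hb s hs).2⟩
  smul_mem' := by
    intro r a ha s hs
    exact ⟨by rw [smul_mul_assoc]; exact K.smul_mem r (ha s hs).1,
           by rw [mul_smul_comm]; exact K.smul_mem r (ha s hs).2⟩

theorem mem_cent {K S : Submodule F A} {a : A} :
    a ∈ cent K S ↔ ∀ s ∈ S, a * s ∈ K ∧ s * a ∈ K := Iff.rfl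

theorem le_cent_self {K S : Submodule F A} (hK : IsIdeal F K) : K ≤ cent K S :=
  fun a ha => fun s _ => ⟨(hK s a ha).2, (hK s a ha).1⟩

variable (leib : ∀ a b c : A, a * (b * c) = a * b * c + b * (a * c))
include leib

/-- `I·J ⊔ J·I` is an ideal for ideals `I`, `J`. -/
theorem isIdeal_mulSpan_sup {I J : Submodule F A} (hI : IsIdeal F I) (hJ : IsIdeal F J) :
    IsIdeal F (mulSpan F I J ⊔ mulSpan F J I) := by
  intro a x hx
  obtain ⟨y, hy, z, hz, rfl⟩ := Submodule.mem_sup.1 hx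
  have key : ∀ (P Q : Submodule F A), IsIdeal F P → IsIdeal F Q → ∀ w ∈ mulSpan F P Q,
      a * w ∈ mulSpan F P Q ∧ w * a ∈ mulSpan F P Q ⊔ mulSpan F Q P := by
    intro P Q hP hQ w hw
    constructor
    · refine mul_mem_of_right hw fun s hs t ht => ?_
      rw [leib a s t]
      exact add_mem (mul_mem_mulSpan (hP a s hs).1 ht) (mul_mem_mulSpan hs (hQ a t ht).1)
    · refine mul_mem_of_left hw fun s hs t ht => ?_
      have e : (s * t) * a = s * (t * a) - t * (s * a) := by rw [leib s t a]; abel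
      rw [e]
      exact sub_mem (Submodule.mem_sup_left (mul_mem_mulSpan hs (hQ a t ht).2))
        (Submodule.mem_sup_right (mul_mem_mulSpan ht (hP a s hs).2))
  constructor
  · rw [mul_add]
    exact add_mem (Submodule.mem_sup_left (key I J hI hJ y hy).1)
      (Submodule.mem_sup_right (key J I hJ hI z hz).1)
  · rw [add_mul]
    refine add_mem ((key I J hI hJ y hy).2) ?_
    have := (key J I hJ hI z hz).2
    rwa [sup_comm] at this

theorem isIdeal_mulSpan_self {I : Submodule F A} (hI : IsIdeal F I) :
    IsIdeal F (mulSpan F I I) := by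
  have := isIdeal_mulSpan_sup leib hI hI
  rwa [sup_idem] at this

omit leib in
theorem lcs_le_self {N : Submodule F A} (hN : IsIdeal F N) : ∀ k, lcs F N k ≤ N
  | 0 => le_rfl
  | k + 1 => mulSpan_le fun s hs t _ => (hN t s hs).2

omit leib in
theorem lcs_mono {S S' : Submodule F A} (h : S ≤ S') : ∀ k, lcs F S k ≤ lcs F S' k
  | 0 => h
  | k + 1 => mulSpan_mono h (lcs_mono h k)

omit leib in
theorem derSeries_mono {S S' : Submodule F A} (h : S ≤ S') :
    ∀ k, derSeries F S k ≤ derSeries F S' k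
  | 0 => h
  | k + 1 => mulSpan_mono (derSeries_mono h k) (derSeries_mono h k)

omit leib in
theorem isNilp_of_le {S N : Submodule F A} (h : S ≤ N) (hN : IsNilp F N) : IsNilp F S := by
  obtain ⟨n, hn⟩ := hN
  exact ⟨n, le_bot_iff.1 (hn ▸ lcs_mono h n)⟩

/-- products of lower-central-series terms: `lcs j · lcs k ≤ lcs (j+k+1)`. -/
theorem mulSpan_lcs_lcs (S : Submodule F A) :
    ∀ j k, mulSpan F (lcs F S j) (lcs F S k) ≤ lcs F S (j + k + 1) := by
  intro j
  induction j with
  | zero => intro k; exact le_of_eq (by rw [Nat.zero_add]; rfl)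
  | succ j ih =>
    intro k
    refine mulSpan_le fun x hx t ht => ?_
    refine mul_mem_of_left (U := lcs F S (j + 1 + k + 1)) hx fun s hs u hu => ?_
    have e : (s * u) * t = s * (u * t) - u * (s * t) := by rw [leib s u t]; abel
    rw [e]
    refine sub_mem ?_ ?_
    · have h1 : u * t ∈ lcs F S (j + k + 1) := ih k (mul_mem_mulSpan hu ht)
      have h2 : s * (u * t) ∈ lcs F S (j + k + 2) := mul_mem_mulSpan hs h1
      have : j + 1 + k + 1 = j + k + 2 := by omega
      rwa [this]
    · have h1 : s * t ∈ lcs F S (k + 1) := mul_mem_mulSpan hs ht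
      have h2 : u * (s * t) ∈ lcs F S (j + (k + 1) + 1) := ih (k + 1) (mul_mem_mulSpan hu h1)
      have : j + 1 + k + 1 = j + (k + 1) + 1 := by omega
      rwa [this]

omit leib in
theorem mulSpan_sup_left {S K T : Submodule F A} (hK : IsIdeal F K) :
    mulSpan F (S ⊔ K) T ≤ mulSpan F S T ⊔ K := by
  refine mulSpan_le fun s hs t ht => ?_
  obtain ⟨x, hx, k, hk, rfl⟩ := Submodule.mem_sup.1 hs
  rw [add_mul]
  exact add_mem (Submodule.mem_sup_left (mul_mem_mulSpan hx ht))
    (Submodule.mem_sup_right (hK t k hk).2)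

omit leib in
theorem mulSpan_sup_right {S K T : Submodule F A} (hK : IsIdeal F K) :
    mulSpan F S (T ⊔ K) ≤ mulSpan F S T ⊔ K := by
  refine mulSpan_le fun s hs t ht => ?_
  obtain ⟨x, hx, k, hk, rfl⟩ := Submodule.mem_sup.1 ht
  rw [mul_add]
  exact add_mem (Submodule.mem_sup_left (mul_mem_mulSpan hs hx))
    (Submodule.mem_sup_right (hK s k hk).1)

omit leib in
theorem lcs_sup_le {N K : Submodule F A} (hK : IsIdeal F K) :
    ∀ m, lcs F (N ⊔ K) m ≤ lcs F N m ⊔ K := by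
  intro m
  induction m with
  | zero => exact le_rfl
  | succ m ih =>
    calc lcs F (N ⊔ K) (m + 1) = mulSpan F (N ⊔ K) (lcs F (N ⊔ K) m) := rfl
      _ ≤ mulSpan F (N ⊔ K) (lcs F N m ⊔ K) := mulSpan_mono le_rfl ih
      _ ≤ mulSpan F (N ⊔ K) (lcs F N m) ⊔ K := mulSpan_sup_right hK
      _ ≤ (mulSpan F N (lcs F N m) ⊔ K) ⊔ K := sup_le_sup_right (mulSpan_sup_left hK) K
      _ = lcs F N (m + 1) ⊔ K := by rw [sup_assoc, sup_idem]; rfl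


theorem isIdeal_cent {K S : Submodule F A} (hK : IsIdeal F K) (hS : IsIdeal F S) :
    IsIdeal F (cent K S) := by
  intro a c hc
  refine ⟨fun b hb => ⟨?_, ?_⟩, fun b hb => ⟨?_, ?_⟩⟩
  · have e : (a * c) * b = a * (c * b) - c * (a * b) := by rw [leib a c b]; abel
    rw [e]
    exact sub_mem (hK a _ (hc b hb).1).1 (hc (a * b) (hS a b hb).1).1
  · rw [leib b a c]
    exact add_mem (hc (b * a) (hS a b hb).2).2 (hK a _ (hc b hb).2).1
  · have e : (c * a) * b = c * (a * b) - a * (c * b) := by rw [leib c a b]; abel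
    rw [e]
    exact sub_mem (hc (a * b) (hS a b hb).1).1 (hK a _ (hc b hb).1).1
  · rw [leib b c a]
    exact add_mem (hK a _ (hc b hb).2).2 (hc (b * a) (hS a b hb).2).1

/-- If `B/K` is a minimal ideal of solvable `A`, then `B·B ≤ K`. -/
theorem minimal_sq_le (hAsolv : IsSolv F (⊤ : Submodule F A))
    {K B : Submodule F A} (hKid : IsIdeal F K) (hB : IsIdeal F B) (hKB : K < B)
    (hBmin : ∀ B' : Submodule F A, IsIdeal F B' → K < B' → ¬ B' < B) :
    mulSpan F B B ≤ K := by
  by_contra h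
  set C2 := mulSpan F B B ⊔ K with hC2def
  have hC2id : IsIdeal F C2 := isIdeal_sup (isIdeal_mulSpan_self leib hB) hKid
  have hC2B : C2 ≤ B := sup_le (mulSpan_le fun s hs t _ => (hB t s hs).2) hKB.le
  have hKC2 : K < C2 := lt_of_le_of_ne le_sup_right fun he => h (le_sup_left.trans he.ge)
  have hC2 : C2 = B := by
    by_contra hne
    exact hBmin C2 hC2id hKC2 (lt_of_le_of_ne hC2B hne)
  have key : ∀ m, B ≤ derSeries F B m ⊔ K := by
    intro m
    induction m with
    | zero => exact le_sup_left
    | succ m ih =>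
      calc B = mulSpan F B B ⊔ K := hC2 ▸ hC2def
        _ ≤ mulSpan F (derSeries F B m ⊔ K) (derSeries F B m ⊔ K) ⊔ K :=
            sup_le_sup_right (mulSpan_mono ih ih) K
        _ ≤ (mulSpan F (derSeries F B m ⊔ K) (derSeries F B m) ⊔ K) ⊔ K :=
            sup_le_sup_right (mulSpan_sup_right hKid) K
        _ ≤ ((mulSpan F (derSeries F B m) (derSeries F B m) ⊔ K) ⊔ K) ⊔ K :=
            sup_le_sup_right (sup_le_sup_right (mulSpan_sup_left hKid) K) K
        _ = derSeries F B (m + 1) ⊔ K := by rw [sup_assoc, sup_assoc, sup_idem, sup_idem]; rfl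
  obtain ⟨m, hm⟩ := hAsolv
  have h1 : derSeries F B m ≤ derSeries F (⊤ : Submodule F A) m := derSeries_mono le_top m
  have h2 : B ≤ K := by
    have := (key m).trans (sup_le_sup_right (h1.trans (le_of_eq hm)) K)
    rwa [bot_sup_eq] at this
  exact hKB.not_ge h2

/-- `cent K B = B` when `B/K` is the minimal ideal contained in every ideal `> K`
and `Φ(A/K) = 0`. -/
theorem cent_eq_minimal {K B : Submodule F A}
    (hKid : IsIdeal F K) (hB : IsIdeal F B) (hKB : K < B)
    (hB2 : mulSpan F B B ≤ K)
    (hBle : ∀ J : Submodule F A, IsIdeal F J → K < J → B ≤ J)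
    (hPrim2 : ∀ J : Submodule F A, IsIdeal F J → K ≤ J →
      (∀ M : Submodule F A, IsMaxSubalg F M → K ≤ M → J ≤ M) → J = K) :
    cent K B = B := by
  have hBC : B ≤ cent K B := fun b hb => fun b' hb' =>
    ⟨hB2 (mul_mem_mulSpan hb hb'), hB2 (mul_mem_mulSpan hb' hb)⟩
  have hKC : K ≤ cent K B := le_cent_self hKid
  have hCid : IsIdeal F (cent K B) := isIdeal_cent leib hKid hB
  -- choose a maximal subalgebra avoiding B
  have hM : ∃ M : Submodule F A, IsMaxSubalg F M ∧ K ≤ M ∧ ¬ B ≤ M := by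
    by_contra hcon
    push_neg at hcon
    exact hKB.ne' (hPrim2 B hB hKB.le fun M hMmax hKM => hcon M hMmax hKM)
  obtain ⟨M, hMmax, hKM, hBM⟩ := hM
  have hMBsub : IsSubalg F (M ⊔ B) := by
    intro x hx y hy
    obtain ⟨m, hm, b, hb, rfl⟩ := Submodule.mem_sup.1 hx
    obtain ⟨m', hm', b', hb', rfl⟩ := Submodule.mem_sup.1 hy
    have e : (m + b) * (m' + b') = m * m' + (m * b' + (b * m' + b * b')) := by
      rw [add_mul, mul_add, mul_add]; abel
    rw [e]
    refine add_mem (Submodule.mem_sup_left (hMmax.1 m hm m' hm')) (Submodule.mem_sup_right ?_)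
    exact add_mem (hB m b' hb').1 (add_mem (hB m' b hb).2 (hB b b' hb').1)
  have hMB : M ⊔ B = ⊤ := by
    exact hMmax.2.2 (M ⊔ B) hMBsub (lt_of_le_of_ne le_sup_left fun he => hBM (le_sup_right.trans he.ge))
  have hDid : IsIdeal F (cent K B ⊓ M) := by
    intro a d hd
    have ha : a ∈ M ⊔ B := hMB ▸ Submodule.mem_top
    obtain ⟨m, hm, b, hb, rfl⟩ := Submodule.mem_sup.1 ha
    have hKD : K ≤ cent K B ⊓ M := le_inf hKC hKM
    constructor
    · rw [add_mul]
      exact add_mem ⟨(hCid m d hd.1).1, hMmax.1 m hm d hd.2⟩ (hKD (hd.1 b hb).2)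
    · rw [mul_add]
      exact add_mem ⟨(hCid m d hd.1).2, hMmax.1 d hd.2 m hm⟩ (hKD (hd.1 b hb).1)
  have hDK : cent K B ⊓ M = K := by
    rcases eq_or_lt_of_le (le_inf hKC hKM : K ≤ cent K B ⊓ M) with h | h
    · exact h.symm
    · exact absurd ((hBle _ hDid h).trans inf_le_right) hBM
  calc cent K B = ⊤ ⊓ cent K B := (top_inf_eq _).symm
    _ = (B ⊔ M) ⊓ cent K B := by rw [← hMB, sup_comm]
    _ = B ⊔ (M ⊓ cent K B) := sup_inf_assoc_of_le M hBC
    _ = B ⊔ K := by rw [inf_comm, hDK]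
    _ = B := sup_eq_left.2 hKB.le

omit leib in
theorem minimal_le_ideal [Module.Finite F A] {K B : Submodule F A}
    (hBuniq : ∀ B'' : Submodule F A, IsIdeal F B'' → K < B'' →
      (∀ B' : Submodule F A, IsIdeal F B' → K < B' → ¬ B' < B'') → B'' = B)
    {J : Submodule F A} (hJ : IsIdeal F J) (hKJ : K < J) : B ≤ J := by
  obtain ⟨B'', ⟨hid, hlt, hle⟩, hmin⟩ :=
    IsArtinian.set_has_minimal {P : Submodule F A | IsIdeal F P ∧ K < P ∧ P ≤ J}
      ⟨J, hJ, hKJ, le_rfl⟩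
  have heq : B'' = B :=
    hBuniq B'' hid hlt fun B' hB' hKB' hlt' => hmin B' ⟨hB', hKB', hlt'.le.trans hle⟩ hlt'
  exact heq ▸ hle


end LeibAux


open LeibAux in
open Leib in
/-- for a solvable `A`, a primitive ideal `K`, and `B/K` the unique
minimal ideal of `A/K`, `K` is generalized Frattini iff `B = Nil(A)`. -/
theorem primitive_genFrattini_iff_minimal_eq_nil
    {F : Type*} [Field F] [Infinite F] {A : Type*} [NonUnitalNonAssocRing A]
    [Module F A] [SMulCommClass F A A] [IsScalarTower F A A] [Module.Finite F A]
    (leib : ∀ a b c : A, a * (b * c) = a * b * c + b * (a * c))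
    (hAsolv : IsSolv F (⊤ : Submodule F A))
    (N : Submodule F A) (hN : IsIdeal F N) (hNnilp : IsNilp F N)
    (hNmax : ∀ M : Submodule F A, IsIdeal F M → IsNilp F M → M ≤ N)
    (K : Submodule F A) (hK : IsPrimitiveIdeal F K)
    (B : Submodule F A) (hB : IsIdeal F B) (hKB : K < B)
    (hBmin : ∀ B' : Submodule F A, IsIdeal F B' → K < B' → ¬ B' < B)
    (hBuniq : ∀ B'' : Submodule F A, IsIdeal F B'' → K < B'' →
      (∀ B' : Submodule F A, IsIdeal F B' → K < B' → ¬ B' < B'') → B'' = B) :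
    GenFrattiniN F K ↔ B = N := by
  classical
  obtain ⟨hKid, hPrim2, -, -⟩ := hK
  have hBle : ∀ J : Submodule F A, IsIdeal F J → K < J → B ≤ J :=
    fun J hJ hKJ => minimal_le_ideal hBuniq hJ hKJ
  have hB2 : mulSpan F B B ≤ K := minimal_sq_le leib hAsolv hKid hB hKB hBmin
  have hCB : cent K B = B := cent_eq_minimal leib hKid hB hKB hB2 hBle hPrim2
  constructor
  · intro h
    have hBnilp : IsNilp F B := h.2 B hB hKB.le ⟨1, hB2⟩
    have hBN : B ≤ N := hNmax B hB hBnilp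
    obtain ⟨n0, hn0⟩ := hNnilp
    have hNKnilp : IsNilp F (N ⊔ K) := h.2 (N ⊔ K) (isIdeal_sup hN hKid) le_sup_right
      ⟨n0, (lcs_sup_le hKid n0).trans (by rw [hn0, bot_sup_eq])⟩
    have hKN : K ≤ N := le_sup_right.trans (hNmax _ (isIdeal_sup hN hKid) hNKnilp)
    by_cases hNle : N ≤ K
    · exact le_antisymm hBN (hNle.trans hKB.le)
    · have hex : ∃ n, lcs F N n ≤ K := ⟨n0, hn0 ▸ bot_le⟩
      have hn : lcs F N (Nat.find hex) ≤ K := Nat.find_spec hex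
      have hnpos : Nat.find hex ≠ 0 := fun h0 => hNle (by rw [h0] at hn; exact hn)
      obtain ⟨m, hm'⟩ : ∃ m, Nat.find hex = m + 1 :=
        ⟨Nat.find hex - 1, (Nat.succ_pred_eq_of_pos (Nat.pos_of_ne_zero hnpos)).symm⟩
      have hnK : lcs F N (m + 1) ≤ K := hm' ▸ hn
      have hmK : ¬ lcs F N m ≤ K := Nat.find_min hex (by omega)
      have hZid : IsIdeal F (cent K N ⊓ N) := isIdeal_inf (isIdeal_cent leib hKid hN) hN
      have hWZ : lcs F N m ≤ cent K N ⊓ N := by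
        refine le_inf (fun w hw x hx => ⟨?_, ?_⟩) (lcs_le_self hN m)
        · exact hnK (mulSpan_lcs_lcs leib N m 0 (mul_mem_mulSpan hw hx))
        · exact hnK (mul_mem_mulSpan hx hw)
      have hKZ : K < cent K N ⊓ N := lt_of_le_of_ne (le_inf (le_cent_self hKid) hKN)
        (fun he => hmK (hWZ.trans he.symm.le))
      have hBZ : B ≤ cent K N ⊓ N := hBle _ hZid hKZ
      have hNC : N ≤ cent K B := fun x hx b hb =>
        ⟨((hBZ hb).1 x hx).2, ((hBZ hb).1 x hx).1⟩
      exact le_antisymm hBN (hCB ▸ hNC)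
  · intro hBN
    refine ⟨(lt_of_lt_of_le hKB le_top).ne, ?_⟩
    rintro J hJ hKJ ⟨n, hlcs⟩
    rcases eq_or_lt_of_le hKJ with rfl | hKJ'
    · exact isNilp_of_le (hKB.le.trans hBN.le) hNnilp
    · have hBJ : B ≤ J := hBle J hJ hKJ'
      by_cases hVK : (mulSpan F J B ⊔ mulSpan F B J) ≤ K
      · have hJC : J ≤ cent K B := fun x hx b hb =>
          ⟨hVK (Submodule.mem_sup_left (mul_mem_mulSpan hx hb)),
           hVK (Submodule.mem_sup_right (mul_mem_mulSpan hb hx))⟩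
        exact isNilp_of_le ((hJC.trans hCB.le).trans hBN.le) hNnilp
      · have hVid : IsIdeal F ((mulSpan F J B ⊔ mulSpan F B J) ⊔ K) :=
          isIdeal_sup (isIdeal_mulSpan_sup leib hJ hB) hKid
        have hVB : (mulSpan F J B ⊔ mulSpan F B J) ⊔ K ≤ B :=
          sup_le (sup_le (mulSpan_le fun s _ t ht => (hB s t ht).1)
            (mulSpan_le fun s hs t _ => (hB t s hs).2)) hKB.le
        have hKV : K < (mulSpan F J B ⊔ mulSpan F B J) ⊔ K :=
          lt_of_le_of_ne le_sup_right fun he => hVK (le_sup_left.trans he.ge)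
        have hVeq : (mulSpan F J B ⊔ mulSpan F B J) ⊔ K = B := by
          by_contra hne
          exact hBmin _ hVid hKV (lt_of_le_of_ne hVB hne)
        have key : ∀ k, B ≤ lcs F J k ⊔ K := by
          intro k
          induction k with
          | zero => exact hBJ.trans le_sup_left
          | succ k ih =>
            have h1 : mulSpan F J B ≤ lcs F J (k + 1) ⊔ K :=
              (mulSpan_mono le_rfl ih).trans (mulSpan_sup_right hKid)
            have h2 : mulSpan F B J ≤ lcs F J (k + 1) ⊔ K :=
              (mulSpan_mono ih le_rfl).trans ((mulSpan_sup_left hKid).trans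
                (sup_le_sup_right (mulSpan_lcs_lcs leib J k 0) K))
            exact hVeq.symm.le.trans (sup_le (sup_le h1 h2) le_sup_right)
        exact absurd ((key n).trans (sup_le hlcs le_rfl)) hKB.not_ge
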